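/- Let I1 = (F, C, s, d, c, r) be a TMC instance with costs satisfying the four-point metric inequality, and let I2 be the associated CFL instance of the metric TMC-to-CFL reduction. Then for every feasible CFL solution (x', z') of I2 there exists a feasible TMC solution (x, z) of I1 whose objective value is at most the objective value of (x', z'). -/

import Mathlib

open Finset

section Aux
variable {F C : Type} [Fintype F] [Fintype C]

lemma tmc_move (d : C → ℕ) (s' : F ⊕ C → ℕ) (c' : F ⊕ C → C → ℝ) (z' : F ⊕ C → ℝ)
    (hc'nonneg : ∀ a j, 0 ≤ c' a j)
    (hc'diag : ∀ j : C, c' (Sum.inr j) j = 0)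
    (htri : ∀ (a : F ⊕ C) (j1 j0 : C), c' a j0 ≤ c' a j1 + c' (Sum.inr j1) j0)
    (hsz : ∀ j : C, (s' (Sum.inr j) : ℝ) * z' (Sum.inr j) ≤ (d j : ℝ))
    (x'' : F ⊕ C → C → ℝ)
    (hx : ∀ a j, 0 ≤ x'' a j) (hdem : ∀ j, ∑ a, x'' a j = (d j : ℝ))
    (hcap : ∀ a, ∑ j, x'' a j ≤ (s' a : ℝ) * z' a) (j' : C) :
    ∃ y : F ⊕ C → C → ℝ,
      (∀ a j, 0 ≤ y a j) ∧ (∀ j, ∑ a, y a j = (d j : ℝ)) ∧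
      (∀ a, ∑ j, y a j ≤ (s' a : ℝ) * z' a) ∧
      (∀ j0, j0 ≠ j' → y (Sum.inr j') j0 = 0) ∧
      (∀ a j0, a ≠ Sum.inr j' → x'' a j' = 0 → x'' a j0 = 0 → y a j0 = 0) ∧
      (∑ a, ∑ j, c' a j * y a j ≤ ∑ a, ∑ j, c' a j * x'' a j) := by
  classical
  obtain ⟨t, ht⟩ : ∃ t : ℝ, t = ∑ j0 ∈ Finset.univ.erase j', x'' (Sum.inr j') j0 := ⟨_, rfl⟩
  obtain ⟨P, hP⟩ : ∃ P : ℝ, P = ∑ a ∈ Finset.univ.erase (Sum.inr j'), x'' a j' := ⟨_, rfl⟩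
  obtain ⟨Q, hQ⟩ : ∃ Q : ℝ,
      Q = ∑ j0 ∈ Finset.univ.erase j', c' (Sum.inr j') j0 * x'' (Sum.inr j') j0 := ⟨_, rfl⟩
  have ht0 : 0 ≤ t := ht ▸ Finset.sum_nonneg fun j0 _ => hx _ _
  have hP0 : 0 ≤ P := hP ▸ Finset.sum_nonneg fun a _ => hx _ _
  have hQ0 : 0 ≤ Q := hQ ▸ Finset.sum_nonneg fun j0 _ => mul_nonneg (hc'nonneg _ _) (hx _ _)
  have hPd : x'' (Sum.inr j') j' + P = (d j' : ℝ) := by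
    rw [hP, Finset.add_sum_erase _ (fun a => x'' a j') (Finset.mem_univ _)]; exact hdem j'
  have hout : x'' (Sum.inr j') j' + t = ∑ j0, x'' (Sum.inr j') j0 := by
    rw [ht, Finset.add_sum_erase _ (fun j0 => x'' (Sum.inr j') j0) (Finset.mem_univ _)]
  have hcapd : ∑ j0, x'' (Sum.inr j') j0 ≤ (d j' : ℝ) := (hcap _).trans (hsz j')
  have htP : t ≤ P := by linarith
  have hcancelP : ∀ u : ℝ, 0 ≤ u → u ≤ t → P * (u / P) = u := by
    intro u hu0 hut
    rcases eq_or_ne P 0 with h | h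
    · have : u = 0 := le_antisymm (by linarith) hu0
      simp [this]
    · field_simp
  have hPt : P * (t / P) = t := hcancelP t ht0 le_rfl
  have hmem_t : ∀ j0 ∈ Finset.univ.erase j', x'' (Sum.inr j') j0 ≤ t := by
    intro j0 hj0
    rw [ht]
    exact Finset.single_le_sum (f := fun j1 => x'' (Sum.inr j') j1) (fun j1 _ => hx _ _) hj0
  have hcancel : ∀ j0, j0 ≠ j' → P * (x'' (Sum.inr j') j0 / P) = x'' (Sum.inr j') j0 :=
    fun j0 hj0 =>
      hcancelP _ (hx _ _) (hmem_t j0 (Finset.mem_erase.2 ⟨hj0, Finset.mem_univ _⟩))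
  have htP1 : t / P ≤ 1 := by
    rcases eq_or_ne P 0 with h | h
    · simp [h]
    · rw [div_le_one (lt_of_le_of_ne hP0 (Ne.symm h))]; exact htP
  have htPn : 0 ≤ t / P := div_nonneg ht0 hP0
  set y : F ⊕ C → C → ℝ := fun a j0 =>
    if a = Sum.inr j' then (if j0 = j' then x'' (Sum.inr j') j' + t else 0)
    else if j0 = j' then x'' a j' * (1 - t / P)
    else x'' a j0 + x'' a j' * (x'' (Sum.inr j') j0 / P) with hy
  have hyDD : y (Sum.inr j') j' = x'' (Sum.inr j') j' + t := by simp [hy]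
  have hyD : ∀ j0, j0 ≠ j' → y (Sum.inr j') j0 = 0 := by
    intro j0 h; simp [hy, h]
  have hyO : ∀ a, a ≠ Sum.inr j' → y a j' = x'' a j' * (1 - t / P) := by
    intro a h; simp [hy, h]
  have hyN : ∀ a j0, a ≠ Sum.inr j' → j0 ≠ j' →
      y a j0 = x'' a j0 + x'' a j' * (x'' (Sum.inr j') j0 / P) := by
    intro a j0 h h'; simp [hy, h, h']
  refine ⟨y, ?_, ?_, ?_, hyD, ?_, ?_⟩
  · -- nonneg
    intro a j0
    by_cases ha : a = Sum.inr j'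
    · rw [ha]
      by_cases hj : j0 = j'
      · rw [hj, hyDD]; have := hx (Sum.inr j') j'; linarith
      · rw [hyD j0 hj]
    · by_cases hj : j0 = j'
      · rw [hj, hyO a ha]
        exact mul_nonneg (hx _ _) (by linarith)
      · rw [hyN a j0 ha hj]
        have := hx a j0
        have := mul_nonneg (hx a j') (div_nonneg (hx (Sum.inr j') j0) hP0)
        linarith
  · -- demand
    intro j0
    rw [← Finset.add_sum_erase _ (fun a => y a j0) (Finset.mem_univ (Sum.inr j'))]
    by_cases hj : j0 = j'
    · rw [hj, hyDD]
      have h2 : ∑ a ∈ Finset.univ.erase (Sum.inr j'), y a j' = P * (1 - t / P) := by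
        calc ∑ a ∈ Finset.univ.erase (Sum.inr j'), y a j'
            = ∑ a ∈ Finset.univ.erase (Sum.inr j'), x'' a j' * (1 - t / P) :=
              Finset.sum_congr rfl fun a ha => hyO a (Finset.mem_erase.1 ha).1
          _ = P * (1 - t / P) := by rw [← Finset.sum_mul, ← hP]
      rw [h2, mul_sub, mul_one, hPt]
      linarith
    · rw [hyD j0 hj]
      have h2 : ∑ a ∈ Finset.univ.erase (Sum.inr j'), y a j0 =
          (∑ a ∈ Finset.univ.erase (Sum.inr j'), x'' a j0) + P * (x'' (Sum.inr j') j0 / P) := by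
        calc ∑ a ∈ Finset.univ.erase (Sum.inr j'), y a j0
            = ∑ a ∈ Finset.univ.erase (Sum.inr j'),
                (x'' a j0 + x'' a j' * (x'' (Sum.inr j') j0 / P)) :=
              Finset.sum_congr rfl fun a ha => hyN a j0 (Finset.mem_erase.1 ha).1 hj
          _ = (∑ a ∈ Finset.univ.erase (Sum.inr j'), x'' a j0)
              + P * (x'' (Sum.inr j') j0 / P) := by
              rw [Finset.sum_add_distrib, ← Finset.sum_mul, ← hP]
      have h3 : x'' (Sum.inr j') j0 + ∑ a ∈ Finset.univ.erase (Sum.inr j'), x'' a j0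
          = (d j0 : ℝ) := by
        rw [Finset.add_sum_erase _ (fun a => x'' a j0) (Finset.mem_univ _)]; exact hdem j0
      rw [h2, hcancel j0 hj]
      linarith
  · -- capacity
    intro a
    rw [← Finset.add_sum_erase _ (y a) (Finset.mem_univ j')]
    by_cases ha : a = Sum.inr j'
    · rw [ha, hyDD]
      have h2 : ∑ j0 ∈ Finset.univ.erase j', y (Sum.inr j') j0 = 0 :=
        Finset.sum_eq_zero fun j0 hj0 => hyD j0 (Finset.mem_erase.1 hj0).1
      rw [h2, add_zero, hout]
      exact hcap _
    · rw [hyO a ha]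
      have h2 : ∑ j0 ∈ Finset.univ.erase j', y a j0 =
          (∑ j0 ∈ Finset.univ.erase j', x'' a j0) + x'' a j' * (t / P) := by
        calc ∑ j0 ∈ Finset.univ.erase j', y a j0
            = ∑ j0 ∈ Finset.univ.erase j',
                (x'' a j0 + x'' a j' * (x'' (Sum.inr j') j0 / P)) :=
              Finset.sum_congr rfl fun j0 hj0 => hyN a j0 ha (Finset.mem_erase.1 hj0).1
          _ = (∑ j0 ∈ Finset.univ.erase j', x'' a j0) + x'' a j' * (t / P) := by
              rw [Finset.sum_add_distrib, ← Finset.mul_sum]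
              congr 2
              rw [← Finset.sum_div, ← ht]
      have h3 : x'' a j' + ∑ j0 ∈ Finset.univ.erase j', x'' a j0 = ∑ j0, x'' a j0 :=
        Finset.add_sum_erase _ (x'' a) (Finset.mem_univ _)
      have h4 := hcap a
      have h5 : x'' a j' * (1 - t / P) + x'' a j' * (t / P) = x'' a j' := by ring
      rw [h2]
      linarith
  · -- preservation
    intro a j0 ha h1 h2
    by_cases hj : j0 = j'
    · rw [hj, hyO a ha, h1, zero_mul]
    · rw [hyN a j0 ha hj, h1, h2, zero_mul, add_zero]
  · -- cost
    have hrow0 : ∑ j0, c' (Sum.inr j') j0 * y (Sum.inr j') j0 = 0 := by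
      rw [← Finset.add_sum_erase _ (fun j0 => c' (Sum.inr j') j0 * y (Sum.inr j') j0)
        (Finset.mem_univ j'), hc'diag, zero_mul, zero_add]
      exact Finset.sum_eq_zero fun j0 hj0 => by
        rw [hyD j0 (Finset.mem_erase.1 hj0).1, mul_zero]
    have hrowold0 : ∑ j0, c' (Sum.inr j') j0 * x'' (Sum.inr j') j0 = Q := by
      rw [← Finset.add_sum_erase _ (fun j0 => c' (Sum.inr j') j0 * x'' (Sum.inr j') j0)
        (Finset.mem_univ j'), hc'diag, zero_mul, zero_add, hQ]
    have hrow : ∀ a ∈ Finset.univ.erase (Sum.inr j'),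
        ∑ j0, c' a j0 * y a j0 ≤ (∑ j0, c' a j0 * x'' a j0) + x'' a j' * (Q / P) := by
      intro a ha
      have ha' : a ≠ Sum.inr j' := (Finset.mem_erase.1 ha).1
      have h1 : ∑ j0, c' a j0 * y a j0 =
          c' a j' * (x'' a j' * (1 - t / P)) +
            ∑ j0 ∈ Finset.univ.erase j',
              c' a j0 * (x'' a j0 + x'' a j' * (x'' (Sum.inr j') j0 / P)) := by
        rw [← Finset.add_sum_erase _ (fun j0 => c' a j0 * y a j0) (Finset.mem_univ j'),
          hyO a ha']
        exact congrArg _ (Finset.sum_congr rfl fun j0 hj0 => by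
          rw [hyN a j0 ha' (Finset.mem_erase.1 hj0).1])
      have h2 : ∑ j0 ∈ Finset.univ.erase j',
            c' a j0 * (x'' a j0 + x'' a j' * (x'' (Sum.inr j') j0 / P)) ≤
          (∑ j0 ∈ Finset.univ.erase j', c' a j0 * x'' a j0) +
            (c' a j' * (x'' a j' * (t / P)) + x'' a j' * (Q / P)) := by
        have hterm : ∀ j0 ∈ Finset.univ.erase j',
            c' a j0 * (x'' a j0 + x'' a j' * (x'' (Sum.inr j') j0 / P)) ≤
              c' a j0 * x'' a j0 +
                (c' a j' * (x'' a j' * (x'' (Sum.inr j') j0 / P)) +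
                  x'' a j' * (c' (Sum.inr j') j0 * x'' (Sum.inr j') j0 / P)) := by
          intro j0 hj0
          set B := x'' a j' * (x'' (Sum.inr j') j0 / P) with hBdef
          have hB : 0 ≤ B :=
            mul_nonneg (hx _ _) (div_nonneg (hx _ _) hP0)
          have h := mul_le_mul_of_nonneg_right (htri a j' j0) hB
          have e1 : x'' a j' * (c' (Sum.inr j') j0 * x'' (Sum.inr j') j0 / P)
              = c' (Sum.inr j') j0 * B := by rw [hBdef]; ring
          have e2 : c' a j0 * (x'' a j0 + B) = c' a j0 * x'' a j0 + c' a j0 * B := by ring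
          have e3 : (c' a j' + c' (Sum.inr j') j0) * B
              = c' a j' * B + c' (Sum.inr j') j0 * B := by ring
          linarith
        calc ∑ j0 ∈ Finset.univ.erase j',
              c' a j0 * (x'' a j0 + x'' a j' * (x'' (Sum.inr j') j0 / P))
            ≤ ∑ j0 ∈ Finset.univ.erase j',
              (c' a j0 * x'' a j0 +
                (c' a j' * (x'' a j' * (x'' (Sum.inr j') j0 / P)) +
                  x'' a j' * (c' (Sum.inr j') j0 * x'' (Sum.inr j') j0 / P))) :=
              Finset.sum_le_sum hterm
          _ = (∑ j0 ∈ Finset.univ.erase j', c' a j0 * x'' a j0) +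
                (c' a j' * (x'' a j' * (t / P)) + x'' a j' * (Q / P)) := by
              rw [Finset.sum_add_distrib, Finset.sum_add_distrib]
              congr 1
              congr 1
              · rw [← Finset.mul_sum, ← Finset.mul_sum, ← Finset.sum_div, ← ht]
              · rw [← Finset.mul_sum, ← Finset.sum_div, ← hQ]
      have h3 : ∑ j0, c' a j0 * x'' a j0 =
          c' a j' * x'' a j' + ∑ j0 ∈ Finset.univ.erase j', c' a j0 * x'' a j0 :=
        (Finset.add_sum_erase _ (fun j0 => c' a j0 * x'' a j0) (Finset.mem_univ _)).symm
      have h5 : c' a j' * (x'' a j' * (1 - t / P)) + c' a j' * (x'' a j' * (t / P))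
          = c' a j' * x'' a j' := by ring
      rw [h1, h3]
      linarith
    rw [← Finset.add_sum_erase _ (fun a => ∑ j0, c' a j0 * y a j0) (Finset.mem_univ (Sum.inr j')),
      ← Finset.add_sum_erase _ (fun a => ∑ j0, c' a j0 * x'' a j0) (Finset.mem_univ (Sum.inr j')),
      hrow0, hrowold0, zero_add]
    have hsum := Finset.sum_le_sum hrow
    rw [Finset.sum_add_distrib] at hsum
    have h6 : ∑ a ∈ Finset.univ.erase (Sum.inr j'), x'' a j' * (Q / P) = P * (Q / P) := by
      rw [← Finset.sum_mul, ← hP]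
    have h7 : P * (Q / P) ≤ Q := by
      rcases eq_or_ne P 0 with h | h
      · simp [h]; exact hQ0
      · rw [mul_div_assoc', mul_comm, mul_div_assoc, div_self h, mul_one]
    rw [h6] at hsum
    linarith

lemma tmc_elim (d : C → ℕ) (s' : F ⊕ C → ℕ) (c' : F ⊕ C → C → ℝ) (z' : F ⊕ C → ℝ)
    (hc'nonneg : ∀ a j, 0 ≤ c' a j)
    (hc'diag : ∀ j : C, c' (Sum.inr j) j = 0)
    (htri : ∀ (a : F ⊕ C) (j1 j0 : C), c' a j0 ≤ c' a j1 + c' (Sum.inr j1) j0)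
    (hsz : ∀ j : C, (s' (Sum.inr j) : ℝ) * z' (Sum.inr j) ≤ (d j : ℝ))
    (x' : F ⊕ C → C → ℝ)
    (hx : ∀ a j, 0 ≤ x' a j) (hdem : ∀ j, ∑ a, x' a j = (d j : ℝ))
    (hcap : ∀ a, ∑ j, x' a j ≤ (s' a : ℝ) * z' a) (S : Finset C) :
    ∃ y : F ⊕ C → C → ℝ,
      (∀ a j, 0 ≤ y a j) ∧ (∀ j, ∑ a, y a j = (d j : ℝ)) ∧
      (∀ a, ∑ j, y a j ≤ (s' a : ℝ) * z' a) ∧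
      (∀ j ∈ S, ∀ j0, j0 ≠ j → y (Sum.inr j) j0 = 0) ∧
      (∑ a, ∑ j, c' a j * y a j ≤ ∑ a, ∑ j, c' a j * x' a j) := by
  classical
  induction S using Finset.induction_on with
  | empty => exact ⟨x', hx, hdem, hcap, fun j hj => absurd hj (Finset.notMem_empty j), le_rfl⟩
  | insert j' S hjS ih =>
    obtain ⟨y, hy0, hydem, hycap, hyoff, hycost⟩ := ih
    obtain ⟨w, hw0, hwdem, hwcap, hwdiag, hwpres, hwcost⟩ :=
      tmc_move d s' c' z' hc'nonneg hc'diag htri hsz y hy0 hydem hycap j'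
    refine ⟨w, hw0, hwdem, hwcap, ?_, hwcost.trans hycost⟩
    intro j hj j0 hj0
    rcases Finset.mem_insert.1 hj with h | h
    · exact h ▸ hwdiag j0 (h ▸ hj0)
    · have hne : j ≠ j' := fun he => hjS (he ▸ h)
      refine hwpres (Sum.inr j) j0 (fun he => hne (Sum.inr.inj he)) ?_ ?_
      · exact hyoff j h j' (Ne.symm hne)
      · exact hyoff j h j0 hj0

end Aux


/-- metric TMC-to-CFL reduction, backward direction.
Every feasible CFL solution of `I2` yields a feasible TMC solution of `I1`
with objective value at most that of the CFL solution. -/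
theorem stmt_2 {F C : Type} [Fintype F] [Fintype C] [Nonempty F] [Nonempty C]
    -- TMC instance I1 = (F, C, s, d, c, r)
    (s : F → ℕ) (d : C → ℕ) (c : F → C → ℝ) (r : C → ℕ)
    (hc_nonneg : ∀ i j, 0 ≤ c i j)
    (hc_metric : ∀ (i0 i1 : F) (j0 j1 : C), c i0 j0 ≤ c i0 j1 + c i1 j1 + c i1 j0)
    -- CFL instance I2 on facility set F ⊕ C given by the reduction
    (s' : F ⊕ C → ℕ) (f' : F ⊕ C → ℕ) (c' : F ⊕ C → C → ℝ)
    (hs'F : ∀ i : F, s' (Sum.inl i) = s i)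
    (hs'C : ∀ j : C, s' (Sum.inr j) = d j)
    (hf'F : ∀ i : F, f' (Sum.inl i) = 0)
    (hf'C : ∀ j : C, f' (Sum.inr j) = r j)
    (hc'F : ∀ (i : F) (j : C), c' (Sum.inl i) j = c i j)
    (hc'diag : ∀ j : C, c' (Sum.inr j) j = 0)
    (hc'off : ∀ j j0 : C, j0 ≠ j →
      c' (Sum.inr j) j0 =
        Finset.univ.inf' Finset.univ_nonempty (fun i : F => c i j0 + c i j))
    -- a feasible CFL solution (x', z') of I2
    (x' : F ⊕ C → C → ℝ) (z' : F ⊕ C → ℝ)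
    (hx' : ∀ i' j, 0 ≤ x' i' j)
    (hz' : ∀ i', z' i' = 0 ∨ z' i' = 1)
    (hdem' : ∀ j, ∑ i', x' i' j = (d j : ℝ))
    (hcap' : ∀ i', ∑ j, x' i' j ≤ (s' i' : ℝ) * z' i') :
    -- there is a feasible TMC solution (x, z) of I1 with objective value at most that of (x', z')
    ∃ (x : F → C → ℝ) (z : C → ℝ),
      (∀ i j, 0 ≤ x i j) ∧
      (∀ j, z j = 0 ∨ z j = 1) ∧
      (∀ j, ∑ i, x i j = (1 - z j) * (d j : ℝ)) ∧
      (∀ i, ∑ j, x i j ≤ (s i : ℝ)) ∧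
      (∑ i, ∑ j, c i j * x i j) + (∑ j, (r j : ℝ) * z j)
        ≤ (∑ i', ∑ j, c' i' j * x' i' j) + (∑ i', (f' i' : ℝ) * z' i') := by
  classical
  have hc'nn : ∀ (a : F ⊕ C) (j0 : C), 0 ≤ c' a j0 := by
    intro a j0
    cases a with
    | inl i => rw [hc'F]; exact hc_nonneg i j0
    | inr j =>
      by_cases h : j0 = j
      · rw [h, hc'diag]
      · rw [hc'off j j0 h]
        exact Finset.le_inf' _ _ fun i _ => add_nonneg (hc_nonneg _ _) (hc_nonneg _ _)
  have htri : ∀ (a : F ⊕ C) (j1 j0 : C), c' a j0 ≤ c' a j1 + c' (Sum.inr j1) j0 := by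
    intro a j1 j0
    by_cases h01 : j0 = j1
    · rw [h01, hc'diag, add_zero]
    · have hoff := hc'off j1 j0 h01
      cases a with
      | inl i =>
        rw [hc'F, hc'F, hoff]
        have hle : c i j0 - c i j1 ≤
            Finset.univ.inf' Finset.univ_nonempty (fun i1 : F => c i1 j0 + c i1 j1) :=
          Finset.le_inf' _ _ fun i1 _ => by
            have := hc_metric i i1 j0 j1; linarith
        linarith
      | inr j2 =>
        by_cases h21 : j2 = j1
        · rw [h21, hc'diag, zero_add]
        · by_cases h20 : j0 = j2
          · rw [h20, hc'diag]
            exact add_nonneg (hc'nn _ _) (hc'nn _ _)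
          · rw [hc'off j2 j0 h20, hoff, hc'off j2 j1 fun he => h21 he.symm]
            obtain ⟨i0, _, e0⟩ := Finset.exists_mem_eq_inf'
              (Finset.univ_nonempty (α := F)) (fun i : F => c i j1 + c i j2)
            obtain ⟨i1, _, e1⟩ := Finset.exists_mem_eq_inf'
              (Finset.univ_nonempty (α := F)) (fun i : F => c i j0 + c i j1)
            have hle : Finset.univ.inf' Finset.univ_nonempty (fun i : F => c i j0 + c i j2)
                ≤ c i1 j0 + c i1 j2 := Finset.inf'_le _ (Finset.mem_univ i1)
            have hm := hc_metric i1 i0 j2 j1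
            rw [e0, e1]
            linarith
  have hsz : ∀ j : C, (s' (Sum.inr j) : ℝ) * z' (Sum.inr j) ≤ (d j : ℝ) := by
    intro j
    rcases hz' (Sum.inr j) with h | h
    · rw [h, mul_zero]; exact Nat.cast_nonneg _
    · rw [h, mul_one, hs'C]
  obtain ⟨y, hy0, hydem, hycap, hyoff, hycost⟩ :=
    tmc_elim d s' c' z' hc'nn hc'diag htri hsz x' hx' hdem' hcap' Finset.univ
  have hyoff' : ∀ j j0 : C, j0 ≠ j → y (Sum.inr j) j0 = 0 :=
    fun j => hyoff j (Finset.mem_univ j)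
  have hz01 : ∀ j : C, 0 ≤ z' (Sum.inr j) ∧ z' (Sum.inr j) ≤ 1 := by
    intro j; rcases hz' (Sum.inr j) with h | h <;> rw [h] <;> norm_num
  have hinr : ∀ j : C, ∑ j0 : C, y (Sum.inr j0) j = y (Sum.inr j) j := by
    intro j
    exact Fintype.sum_eq_single j fun b hb => hyoff' b j (Ne.symm hb)
  have hsplit : ∀ j : C,
      (∑ i : F, y (Sum.inl i) j) + y (Sum.inr j) j = (d j : ℝ) := by
    intro j
    rw [← hinr j, ← Fintype.sum_sum_type (f := fun a => y a j)]
    exact hydem j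
  have hclosed : ∀ j : C, z' (Sum.inr j) = 0 → y (Sum.inr j) j = 0 := by
    intro j h
    have h1 := hycap (Sum.inr j)
    rw [h, mul_zero] at h1
    have h2 : ∑ j0, y (Sum.inr j) j0 = 0 :=
      le_antisymm h1 (Finset.sum_nonneg fun j0 _ => hy0 _ _)
    have h3 := (Finset.sum_eq_zero_iff_of_nonneg fun j0 _ => hy0 (Sum.inr j) j0).1 h2
    exact h3 j (Finset.mem_univ j)
  refine ⟨fun i j => (1 - z' (Sum.inr j)) * y (Sum.inl i) j, fun j => z' (Sum.inr j),
    ?_, fun j => hz' (Sum.inr j), ?_, ?_, ?_⟩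
  · intro i j
    exact mul_nonneg (by linarith [(hz01 j).2]) (hy0 _ _)
  · intro j
    show ∑ i, (1 - z' (Sum.inr j)) * y (Sum.inl i) j = (1 - z' (Sum.inr j)) * (d j : ℝ)
    rw [← Finset.mul_sum]
    rcases hz' (Sum.inr j) with h | h
    · have h1 := hclosed j h
      have h2 := hsplit j
      rw [h]
      have : (∑ i : F, y (Sum.inl i) j) = (d j : ℝ) := by linarith
      rw [this]
    · rw [h]; ring
  · intro i
    have h1 : ∑ j, (1 - z' (Sum.inr j)) * y (Sum.inl i) j ≤ ∑ j, y (Sum.inl i) j :=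
      Finset.sum_le_sum fun j _ => by
        have h1 := hy0 (Sum.inl i) j
        have h2 := (hz01 j).1
        have h3 := mul_nonneg h2 h1
        nlinarith
    refine h1.trans ((hycap (Sum.inl i)).trans ?_)
    rcases hz' (Sum.inl i) with h | h
    · rw [h, mul_zero]; exact Nat.cast_nonneg _
    · rw [h, mul_one, hs'F]
  · have htrans : ∑ i, ∑ j, c i j * ((1 - z' (Sum.inr j)) * y (Sum.inl i) j)
        ≤ ∑ a, ∑ j, c' a j * y a j := by
      rw [Fintype.sum_sum_type (f := fun a => ∑ j, c' a j * y a j)]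
      have h1 : ∑ i, ∑ j, c i j * ((1 - z' (Sum.inr j)) * y (Sum.inl i) j)
          ≤ ∑ i, ∑ j, c' (Sum.inl i) j * y (Sum.inl i) j := by
        refine Finset.sum_le_sum fun i _ => Finset.sum_le_sum fun j _ => ?_
        rw [hc'F]
        have hw := hy0 (Sum.inl i) j
        have h2 := (hz01 j).1
        have h3 := hc_nonneg i j
        have h4 := mul_nonneg h3 (mul_nonneg h2 hw)
        have e : c i j * ((1 - z' (Sum.inr j)) * y (Sum.inl i) j)
            = c i j * y (Sum.inl i) j - c i j * (z' (Sum.inr j) * y (Sum.inl i) j) := by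
          ring
        linarith
      have h2 : 0 ≤ ∑ j0 : C, ∑ j, c' (Sum.inr j0) j * y (Sum.inr j0) j :=
        Finset.sum_nonneg fun j0 _ => Finset.sum_nonneg fun j _ =>
          mul_nonneg (hc'nn _ _) (hy0 _ _)
      linarith
    have hpen : ∑ j, (r j : ℝ) * z' (Sum.inr j) = ∑ a, (f' a : ℝ) * z' a := by
      rw [Fintype.sum_sum_type (f := fun a => (f' a : ℝ) * z' a)]
      have h1 : ∑ i : F, (f' (Sum.inl i) : ℝ) * z' (Sum.inl i) = 0 :=
        Finset.sum_eq_zero fun i _ => by rw [hf'F, Nat.cast_zero, zero_mul]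
      have h2 : ∑ j : C, (f' (Sum.inr j) : ℝ) * z' (Sum.inr j)
          = ∑ j, (r j : ℝ) * z' (Sum.inr j) :=
        Finset.sum_congr rfl fun j _ => by rw [hf'C]
      rw [h1, h2, zero_add]
    rw [hpen]
    exact add_le_add (htrans.trans hycost) le_rfl
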